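/- Let A, C, D, z be complex numbers such that x = C + i(Az + D z̄) is real. If |A|² + |D|² + 2Re(C) ≤ 0, then x ≤ |z|². -/

import Mathlib

open Complex

theorem stmt_0 (A C D z : ℂ)
    (hreal : (C + Complex.I * (A * z + D * (starRingEnd ℂ z))).im = 0)
    (hineq : ‖A‖ ^ 2 + ‖D‖ ^ 2 + 2 * C.re ≤ 0) :
    (C + Complex.I * (A * z + D * (starRingEnd ℂ z))).re ≤ ‖z‖ ^ 2 := by
  have h1 : |(A * z + D * (starRingEnd ℂ z)).im| ≤ ‖(A * z + D * (starRingEnd ℂ z))‖ :=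
    Complex.abs_im_le_norm _
  have h2 : ‖(A * z + D * (starRingEnd ℂ z))‖ ≤
      ‖A‖ * ‖z‖ + ‖D‖ * ‖z‖ := by
    calc ‖(A * z + D * (starRingEnd ℂ z))‖ ≤
        ‖(A * z)‖ + ‖(D * (starRingEnd ℂ z))‖ := norm_add_le _ _
      _ = ‖A‖ * ‖z‖ + ‖D‖ * ‖z‖ := by
        simp [map_mul]
    
  have h3 := abs_le.mp (le_trans h1 h2)
  simp only [Complex.add_re, Complex.mul_re, Complex.I_re, Complex.I_im]
  nlinarith [sq_nonneg (‖A‖ - ‖z‖), sq_nonneg (‖D‖ - ‖z‖),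
    h3.1, h3.2]
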